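/- Let g be an orientation-preserving homeomorphism of 𝕋 with irrational rotation number α. Then the g-invariant Borel probability measure on 𝕋 is unique, and any two continuous non-decreasing semi-conjugacies h₁, h₂ with hᵢ ∘ g = hᵢ + α differ by a constant. -/

import Mathlib

open MeasureTheory Filter Set


-- density of ℤα + ℤ
lemma dense_orbit_aux (α : ℝ) (hirr : Irrational α) :
    Dense {x : ℝ | ∃ n m : ℤ, (n : ℝ) * α + m = x} := by
  have h := (AddSubgroup.closure ({α, (1:ℝ)} : Set ℝ)).dense_or_cyclic
  rcases h with h | ⟨a, ha⟩
  · convert h using 1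
    ext x
    simp only [Set.mem_setOf_eq, SetLike.mem_coe, AddSubgroup.mem_closure_pair]
    constructor
    · rintro ⟨n, m, rfl⟩; exact ⟨n, m, by simp [zsmul_eq_mul]⟩
    · rintro ⟨n, m, rfl⟩; exact ⟨n, m, by simp [zsmul_eq_mul]⟩
  · exfalso
    have hα : α ∈ AddSubgroup.closure ({α, (1:ℝ)} : Set ℝ) :=
      AddSubgroup.subset_closure (by simp)
    have h1 : (1:ℝ) ∈ AddSubgroup.closure ({α, (1:ℝ)} : Set ℝ) :=
      AddSubgroup.subset_closure (by simp)
    rw [ha, AddSubgroup.mem_closure_singleton] at hα h1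
    obtain ⟨m, hm⟩ := hα
    obtain ⟨n, hn⟩ := h1
    have hn0 : n ≠ 0 := by rintro rfl; simp at hn
    have ha0 : (a:ℝ) ≠ 0 := by rintro rfl; simp at hn
    apply hirr
    refine ⟨(m : ℚ) / (n : ℚ), ?_⟩
    have : (n:ℝ) * a = 1 := by rw [← hn]; simp [zsmul_eq_mul]
    have hm' : (m:ℝ) * a = α := by rw [← hm]; simp [zsmul_eq_mul]
    have hnR : (n:ℝ) ≠ 0 := Int.cast_ne_zero.mpr hn0
    push_cast
    rw [div_eq_iff hnR, ← hm']
    rw [mul_assoc, mul_comm a, this, mul_one]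


section
variable [hF : Fact ((0:ℝ) < 1)]

lemma equivIoc_coe_eq (a x : ℝ) (hx : x ∈ Set.Ioc a (a + 1)) :
    ((AddCircle.equivIoc 1 a (x : AddCircle (1:ℝ))) : ℝ) = x := by
  have : (AddCircle.equivIoc 1 a) (x : AddCircle (1:ℝ)) = ⟨x, hx⟩ := by
    rw [Equiv.apply_eq_iff_eq_symm_apply]
    rfl
  rw [this]

lemma coe_equivIoc_symm (a : ℝ) (z : AddCircle (1:ℝ)) :
    (((AddCircle.equivIoc 1 a z : ℝ)) : AddCircle (1:ℝ)) = z :=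
  (AddCircle.equivIoc 1 a).symm_apply_apply z

lemma mem_Ioc_equivIoc (a : ℝ) (z : AddCircle (1:ℝ)) :
    ((AddCircle.equivIoc 1 a z : ℝ)) ∈ Set.Ioc a (a + 1) :=
  (AddCircle.equivIoc 1 a z).2

lemma image_coe_eq_preimage (a : ℝ) (S : Set ℝ) (hS : S ⊆ Set.Ioc a (a + 1)) :
    (((↑) : ℝ → AddCircle (1:ℝ)) '' S) = (fun z => ((AddCircle.equivIoc 1 a z : ℝ))) ⁻¹' S := by
  ext z
  constructor
  · rintro ⟨x, hx, rfl⟩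
    simpa [equivIoc_coe_eq a x (hS hx)] using hx
  · intro hz
    exact ⟨_, hz, coe_equivIoc_symm a z⟩

lemma measurable_repr (a : ℝ) :
    Measurable (fun z : AddCircle (1:ℝ) => ((AddCircle.equivIoc 1 a z : ℝ))) :=
  measurable_subtype_coe.comp (AddCircle.measurableEquivIoc 1 a).measurable

lemma coe_real_add_one (x : ℝ) : ((x + 1 : ℝ) : AddCircle (1:ℝ)) = (x : AddCircle (1:ℝ)) := by
  have h : ((1 : ℝ) : AddCircle (1:ℝ)) = 0 := AddCircle.coe_period 1
  rw [show ((x + 1 : ℝ) : AddCircle (1:ℝ)) = (x : AddCircle (1:ℝ)) + ((1:ℝ) : AddCircle (1:ℝ)) from rfl, h, add_zero]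

lemma coe_eq_coe_iff_int (x y : ℝ) :
    ((x : AddCircle (1:ℝ)) = (y : AddCircle (1:ℝ))) ↔ ∃ m : ℤ, x = y + m := by
  rw [QuotientAddGroup.eq_iff_sub_mem, AddSubgroup.mem_zmultiples_iff]
  constructor
  · rintro ⟨m, hm⟩
    exact ⟨m, by simp [zsmul_eq_mul] at hm; linarith⟩
  · rintro ⟨m, hm⟩
    exact ⟨m, by simp [zsmul_eq_mul]; linarith⟩

end

-- integer lift for degree one maps
lemma lift_int_aux (H : ℝ → ℝ) (hl : ∀ x, H (x + 1) = H x + 1) :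
    ∀ (x : ℝ) (n : ℤ), H (x + n) = H x + n := by
  have hneg : ∀ x : ℝ, H (x - 1) = H x - 1 := by
    intro x
    have := hl (x - 1)
    simp at this
    linarith
  intro x n
  induction n using Int.induction_on with
  | zero => simp
  | succ k ih =>
    have : x + ((k : ℤ) + 1 : ℤ) = (x + k) + 1 := by push_cast; ring
    rw [this, hl]; push_cast at ih ⊢; linarith
  | pred k ih =>
    have : x + (-(k : ℤ) - 1 : ℤ) = (x + (-k : ℤ)) - 1 := by push_cast; ring
    rw [this, hneg]; push_cast at ih ⊢; linarith

lemma semiconj_unique (G : ℝ → ℝ) (α : ℝ)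
    (hG_cont : Continuous G) (hG_mono : StrictMono G)
    (hG_lift : ∀ x, G (x + 1) = G x + 1)
    (hirr : Irrational α)
    (H₁ H₂ : ℝ → ℝ) (h₁c : Continuous H₁) (h₁m : Monotone H₁)
    (h₁l : ∀ x, H₁ (x + 1) = H₁ x + 1)
    (h₂c : Continuous H₂) (h₂m : Monotone H₂) (h₂l : ∀ x, H₂ (x + 1) = H₂ x + 1)
    (h₁s : ∀ x, H₁ (G x) = H₁ x + α) (h₂s : ∀ x, H₂ (G x) = H₂ x + α) :
    ∃ cst : ℝ, ∀ x, H₁ x = H₂ x + cst := by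
  -- G is surjective
  have hGsurj : Function.Surjective G := by
    intro y
    obtain ⟨k, hk⟩ := exists_nat_ge (|y - G 0|) 
    have h1 : G (-(k:ℝ)) ≤ y := by
      have := lift_int_aux G hG_lift 0 (-(k:ℤ))
      have h2 := abs_le.1 hk
      push_cast at this ⊢
      rw [show (0:ℝ) + -(k:ℝ) = -(k:ℝ) by ring] at this
      rw [this]; linarith [h2.1]
    have h2 : y ≤ G (k:ℝ) := by
      have := lift_int_aux G hG_lift 0 (k:ℤ)
      have h2 := abs_le.1 hk
      push_cast at this ⊢
      rw [show (0:ℝ) + (k:ℝ) = (k:ℝ) by ring] at this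
      rw [this]; linarith [h2.2]
    have hsub : Set.Icc (G (-(k:ℝ))) (G (k:ℝ)) ⊆ G '' Set.Icc (-(k:ℝ)) (k:ℝ) :=
      intermediate_value_Icc (neg_le_self (Nat.cast_nonneg k)) hG_cont.continuousOn
    obtain ⟨x, _, hx⟩ := hsub ⟨h1, h2⟩
    exact ⟨x, hx⟩
  set oG : ℝ ≃o ℝ := StrictMono.orderIsoOfSurjective G hG_mono hGsurj with hoG
  set T : Equiv.Perm ℝ := oG.toEquiv with hT
  have hTG : ∀ x, T x = G x := fun x => rfl
  have hTiter : ∀ (n : ℤ) (x : ℝ), (T ^ (n + 1) : Equiv.Perm ℝ) x = G ((T ^ n : Equiv.Perm ℝ) x) := by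
    intro n x
    rw [show n + 1 = 1 + n by ring, zpow_add, zpow_one]
    rfl
  -- orbit values
  have horb : ∀ (H : ℝ → ℝ), (∀ x, H (x + 1) = H x + 1) → (∀ x, H (G x) = H x + α) →
      ∀ n m : ℤ, H ((T ^ n : Equiv.Perm ℝ) 0 + m) = H 0 + n * α + m := by
    intro H hl hs n m
    rw [lift_int_aux H hl]
    have : ∀ n : ℤ, H ((T ^ n : Equiv.Perm ℝ) 0) = H 0 + n * α := by
      intro n
      induction n using Int.induction_on with
      | zero => simp
      | succ k ih => rw [hTiter k 0, hs, ih]; push_cast; ring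
      | pred k ih =>
        have h := hTiter (-(k:ℤ) - 1) 0
        rw [show -(k:ℤ) - 1 + 1 = -(k:ℤ) by ring] at h
        have := hs ((T ^ (-(k:ℤ) - 1) : Equiv.Perm ℝ) 0)
        rw [← h, ih] at this
        have : H ((T ^ (-(k:ℤ) - 1) : Equiv.Perm ℝ) 0) = H 0 + (-(k:ℝ)) * α - α := by
          push_cast at this ⊢; linarith
        rw [this]; push_cast; ring
    rw [this]
  set c := H₁ 0 - H₂ 0 with hc
  refine ⟨c, fun y => ?_⟩
  set p : ℤ × ℤ → ℝ := fun q => (T ^ q.1 : Equiv.Perm ℝ) 0 + q.2 with hp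
  set S : Set ℝ := closure (Set.range p) with hS
  have hSclosed : IsClosed S := isClosed_closure
  have hDS : ∀ z ∈ S, H₁ z - H₂ z = c := by
    have heq : Set.EqOn (fun z => H₁ z - H₂ z) (fun _ => c) (Set.range p) := by
      rintro _ ⟨⟨n, m⟩, rfl⟩
      simp only [hp]
      rw [horb H₁ h₁l h₁s n m, horb H₂ h₂l h₂s n m]
      ring
    have := heq.closure (h₁c.sub h₂c) continuous_const
    exact fun z hz => this hz
  -- sup and inf
  have hne₁ : (S ∩ Set.Iic y).Nonempty := by
    refine ⟨(⌊y⌋ : ℝ), subset_closure ⟨(0, ⌊y⌋), ?_⟩, Int.floor_le y⟩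
    simp [hp]
  have hbdd₁ : BddAbove (S ∩ Set.Iic y) := ⟨y, fun z hz => hz.2⟩
  have hne₂ : (S ∩ Set.Ici y).Nonempty := by
    refine ⟨(⌈y⌉ : ℝ), subset_closure ⟨(0, ⌈y⌉), ?_⟩, Int.le_ceil y⟩
    simp [hp]
  have hbdd₂ : BddBelow (S ∩ Set.Ici y) := ⟨y, fun z hz => hz.2⟩
  set a := sSup (S ∩ Set.Iic y) with hadef
  set b := sInf (S ∩ Set.Ici y) with hbdef
  have ha : a ∈ S ∩ Set.Iic y := (hSclosed.inter isClosed_Iic).csSup_mem hne₁ hbdd₁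
  have hb : b ∈ S ∩ Set.Ici y := (hSclosed.inter isClosed_Ici).csInf_mem hne₂ hbdd₂
  have hay : a ≤ y := ha.2
  have hyb : y ≤ b := hb.2
  have key : ∀ H : ℝ → ℝ, Monotone H →
      (∀ n m : ℤ, H (p (n, m)) = H 0 + n * α + m) → H a = H b := by
    intro H hm horbH
    by_contra hne
    have hab : H a < H b := lt_of_le_of_ne (hm (hay.trans hyb)) hne
    have hIoo : (Set.Ioo (H a - H 0) (H b - H 0)).Nonempty := Set.nonempty_Ioo.2 (by linarith)
    obtain ⟨d, hd1, hd2⟩ := (dense_orbit_aux α hirr).exists_mem_open isOpen_Ioo hIoo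
    obtain ⟨n, m, rfl⟩ := hd1
    set w := p (n, m) with hw
    have hHw : H a < H w ∧ H w < H b := by
      rw [horbH n m]
      constructor <;> [linarith [hd2.1]; linarith [hd2.2]]
    have haw : a < w := by
      by_contra h
      exact absurd (hm (not_lt.1 h)) (not_le.2 hHw.1)
    have hwb : w < b := by
      by_contra h
      exact absurd (hm (not_lt.1 h)) (not_le.2 hHw.2)
    have hwS : w ∈ S := subset_closure ⟨(n, m), rfl⟩
    rcases le_or_gt w y with h | h
    · exact absurd (le_csSup hbdd₁ ⟨hwS, h⟩) (not_le.2 haw)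
    · exact absurd (csInf_le hbdd₂ ⟨hwS, h.le⟩) (not_le.2 hwb)
  have k₁ : H₁ a = H₁ b := key H₁ h₁m (horb H₁ h₁l h₁s)
  have k₂ : H₂ a = H₂ b := key H₂ h₂m (horb H₂ h₂l h₂s)
  have e₁ : H₁ y = H₁ a := le_antisymm (k₁ ▸ h₁m hyb) (h₁m hay)
  have e₂ : H₂ y = H₂ a := le_antisymm (k₂ ▸ h₂m hyb) (h₂m hay)
  have := hDS a ha.1
  rw [e₁, e₂]
  linarith


lemma G_surj_aux (G : ℝ → ℝ) (hG_cont : Continuous G)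
    (hG_lift : ∀ x, G (x + 1) = G x + 1) : Function.Surjective G := by
  intro y
  obtain ⟨k, hk⟩ := exists_nat_ge (|y - G 0|)
  have h1 : G (-(k:ℝ)) ≤ y := by
    have := lift_int_aux G hG_lift 0 (-(k:ℤ))
    have h2 := abs_le.1 hk
    push_cast at this ⊢
    rw [show (0:ℝ) + -(k:ℝ) = -(k:ℝ) by ring] at this
    rw [this]; linarith [h2.1]
  have h2 : y ≤ G (k:ℝ) := by
    have := lift_int_aux G hG_lift 0 (k:ℤ)
    have h2 := abs_le.1 hk
    push_cast at this ⊢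
    rw [show (0:ℝ) + (k:ℝ) = (k:ℝ) by ring] at this
    rw [this]; linarith [h2.2]
  have hsub : Set.Icc (G (-(k:ℝ))) (G (k:ℝ)) ⊆ G '' Set.Icc (-(k:ℝ)) (k:ℝ) :=
    intermediate_value_Icc (neg_le_self (Nat.cast_nonneg k)) hG_cont.continuousOn
  obtain ⟨x, _, hx⟩ := hsub ⟨h1, h2⟩
  exact ⟨x, hx⟩

lemma exists_lift_of_invariant
    (g : AddCircle (1:ℝ) → AddCircle (1:ℝ)) (G : ℝ → ℝ) (α : ℝ)
    (hg_cont : Continuous g) (hg_bij : Function.Bijective g)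
    (hG_cont : Continuous G) (hG_mono : StrictMono G)
    (hG_lift : ∀ x, G (x + 1) = G x + 1)
    (hproj : ∀ x : ℝ, g (x : AddCircle (1:ℝ)) = ((G x : ℝ) : AddCircle (1:ℝ)))
    (hα : Tendsto (fun n : ℕ => G^[n] 0 / n) atTop (nhds α))
    (hirr : Irrational α)
    (μ : Measure (AddCircle (1:ℝ))) (hμp : IsProbabilityMeasure μ) (hμi : μ.map g = μ) :
    ∃ H : ℝ → ℝ, Continuous H ∧ Monotone H ∧ (∀ x, H (x + 1) = H x + 1) ∧
      (∀ x, H (G x) = H x + α) ∧ H 0 = 0 ∧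
      (∀ a b : ℝ, a ≤ b → b ≤ a + 1 →
        μ (((↑) : ℝ → AddCircle (1:ℝ)) '' Set.Ioc a b) = ENNReal.ofReal (H b - H a)) := by
  haveI : Fact ((0:ℝ) < 1) := ⟨one_pos⟩
  have hg_meas : Measurable g := hg_cont.measurable
  set A : ℝ → ℝ → Set (AddCircle (1:ℝ)) :=
    fun a b => ((↑) : ℝ → AddCircle (1:ℝ)) '' Set.Ioc a b with hA
  -- g as a homeomorphism
  let ge : AddCircle (1:ℝ) ≃ AddCircle (1:ℝ) := Equiv.ofBijective g hg_bij
  let gh : AddCircle (1:ℝ) ≃ₜ AddCircle (1:ℝ) := Continuous.homeoOfEquivCompactToT2 (f := ge) hg_cont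
  have hge : ∀ x, gh x = g x := fun _ => rfl
  have himg : ∀ S : Set (AddCircle (1:ℝ)), g '' S = gh.symm ⁻¹' S := by
    intro S
    ext z
    constructor
    · rintro ⟨x, hx, rfl⟩
      have : gh.symm (g x) = x := gh.symm_apply_apply x
      simpa [Set.mem_preimage, this]
    · intro hz
      exact ⟨gh.symm z, hz, by rw [← hge]; exact gh.apply_symm_apply z⟩
  have himg_meas : ∀ S : Set (AddCircle (1:ℝ)), MeasurableSet S → MeasurableSet (g '' S) := by
    intro S hS
    rw [himg]
    exact gh.symm.continuous.measurable hS
  have inv_meas : ∀ S : Set (AddCircle (1:ℝ)), MeasurableSet S → μ (g '' S) = μ S := by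
    intro S hS
    calc μ (g '' S) = (μ.map g) (g '' S) := by rw [hμi]
    _ = μ (g ⁻¹' (g '' S)) := Measure.map_apply hg_meas (himg_meas S hS)
    _ = μ S := by rw [Set.preimage_image_eq S hg_bij.1]
  -- arc lemmas
  have arc_eq : ∀ a b : ℝ, b ≤ a + 1 →
      A a b = (fun z => ((AddCircle.equivIoc 1 a z : ℝ))) ⁻¹' Set.Ioc a b := by
    intro a b h
    exact image_coe_eq_preimage a _ (Set.Ioc_subset_Ioc_right h)
  have arc_meas : ∀ a b : ℝ, b ≤ a + 1 → MeasurableSet (A a b) := by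
    intro a b h
    rw [arc_eq a b h]
    exact measurable_repr a measurableSet_Ioc
  have arc_add : ∀ a c b : ℝ, a ≤ c → c ≤ b → b ≤ a + 1 →
      μ (A a b) = μ (A a c) + μ (A c b) := by
    intro a c b hac hcb hba
    have h2 : A a c = (fun z => ((AddCircle.equivIoc 1 a z : ℝ))) ⁻¹' Set.Ioc a c :=
      image_coe_eq_preimage a _ (Set.Ioc_subset_Ioc_right (hcb.trans hba))
    have h3 : A c b = (fun z => ((AddCircle.equivIoc 1 a z : ℝ))) ⁻¹' Set.Ioc c b :=
      image_coe_eq_preimage a _ (fun x hx => ⟨lt_of_le_of_lt hac hx.1, hx.2.trans hba⟩)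
    rw [arc_eq a b hba, h2, h3, ← Set.Ioc_union_Ioc_eq_Ioc hac hcb, Set.preimage_union]
    exact measure_union ((Set.Ioc_disjoint_Ioc_of_le le_rfl).preimage _)
      ((measurable_repr a) measurableSet_Ioc)
  have arc_full : ∀ a : ℝ, μ (A a (a + 1)) = 1 := by
    intro a
    have : A a (a+1) = Set.univ := AddCircle.coe_image_Ioc_eq 1 a
    rw [this, measure_univ]
  have arc_shift : ∀ a b : ℝ, A (a + 1) (b + 1) = A a b := by
    intro a b
    ext z
    constructor
    · rintro ⟨x, hx, rfl⟩
      refine ⟨x - 1, ⟨by linarith [hx.1], by linarith [hx.2]⟩, ?_⟩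
      rw [← coe_real_add_one (x - 1), sub_add_cancel]
    · rintro ⟨x, hx, rfl⟩
      exact ⟨x + 1, ⟨by linarith [hx.1], by linarith [hx.2]⟩, coe_real_add_one x⟩
  -- order iso for G
  set oG : ℝ ≃o ℝ := StrictMono.orderIsoOfSurjective G hG_mono
      (G_surj_aux G hG_cont hG_lift) with hoG
  have hoGapp : ∀ x, oG x = G x := fun _ => rfl
  have arc_G : ∀ a b : ℝ, g '' A a b = A (G a) (G b) := by
    intro a b
    rw [hA]
    simp only
    rw [← Set.image_comp]
    have : (g ∘ ((↑) : ℝ → AddCircle (1:ℝ))) '' Set.Ioc a b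
        = (((↑) : ℝ → AddCircle (1:ℝ)) ∘ G) '' Set.Ioc a b := by
      apply Set.image_congr
      intro x _
      exact hproj x
    have him : G '' Set.Ioc a b = Set.Ioc (G a) (G b) := by
      simpa [hoGapp] using oG.image_Ioc a b
    rw [this, Set.image_comp, him]
  have arc_inv : ∀ a b : ℝ, a ≤ b → b ≤ a + 1 → μ (A (G a) (G b)) = μ (A a b) := by
    intro a b hab hba
    rw [← arc_G a b]
    exact inv_meas _ (arc_meas a b hba)
  -- translation number of G is α
  set Gl : CircleDeg1Lift := ⟨⟨G, hG_mono.monotone⟩, hG_lift⟩ with hGl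
  have hGlcoe : ⇑Gl = G := rfl
  have hτ : Gl.translationNumber = α := by
    apply Gl.translationNumber_eq_of_tendsto₀
    rw [hGlcoe]
    exact hα
  -- iterates project
  have hproj_iter : ∀ (k : ℕ) (x : ℝ),
      g^[k] (x : AddCircle (1:ℝ)) = ((G^[k] x : ℝ) : AddCircle (1:ℝ)) := by
    intro k
    induction k with
    | zero => intro x; simp
    | succ k ih =>
      intro x
      rw [Function.iterate_succ_apply', Function.iterate_succ_apply', ih, hproj]
  -- no periodic points
  have no_per : ∀ k : ℕ, 0 < k → ∀ w : AddCircle (1:ℝ), g^[k] w ≠ w := by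
    intro k hk w hw
    induction w using QuotientAddGroup.induction_on with | H x => ?_
    rw [hproj_iter k x] at hw
    obtain ⟨m, hm⟩ := (coe_eq_coe_iff_int (G^[k] x) x).1 hw
    have hcont : Continuous ⇑(Gl ^ k) := Gl.continuous_pow (hGlcoe ▸ hG_cont) k
    have hτk : (Gl ^ k).translationNumber = (m : ℝ) := by
      rw [(Gl ^ k).translationNumber_eq_int_iff hcont]
      exact ⟨x, by rw [CircleDeg1Lift.coe_pow, hGlcoe, hm]⟩
    rw [CircleDeg1Lift.translationNumber_pow, hτ] at hτk
    have : Irrational ((k : ℝ) * α) := Irrational.natCast_mul hirr (Nat.pos_iff_ne_zero.1 hk)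
    exact this.ne_int m hτk
  -- atomless
  have hatomless : ∀ z : AddCircle (1:ℝ), μ {z} = 0 := by
    intro z
    by_contra h0
    have point_mass : ∀ w : AddCircle (1:ℝ), μ {g w} = μ {w} := by
      intro w
      calc μ {g w} = (μ.map g) {g w} := by rw [hμi]
      _ = μ (g ⁻¹' {g w}) := Measure.map_apply hg_meas (measurableSet_singleton _)
      _ = μ {w} := by
          congr 1
          ext x
          simp [hg_bij.1.eq_iff]
    have iter_mass : ∀ n : ℕ, μ {g^[n] z} = μ {z} := by
      intro n
      induction n with
      | zero => simp
      | succ n ih => rw [Function.iterate_succ_apply', point_mass, ih]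
    have horb_inj : Function.Injective (fun n : ℕ => g^[n] z) := by
      have key : ∀ n m : ℕ, n < m → g^[n] z ≠ g^[m] z := by
        intro n m hnm heq
        have : g^[m - n] (g^[n] z) = g^[n] z := by
          rw [← Function.iterate_add_apply, Nat.sub_add_cancel hnm.le, ← heq]
        exact no_per (m - n) (by omega) _ this
      intro n m hnm
      by_contra hne
      rcases lt_or_gt_of_ne hne with h | h
      · exact key n m h hnm
      · exact key m n h hnm.symm
    have hdisj : Pairwise (Function.onFun Disjoint (fun n : ℕ => ({g^[n] z} : Set (AddCircle (1:ℝ))))) := by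
      intro n m hnm
      simp only [Function.onFun, Set.disjoint_singleton]
      exact fun h => hnm (horb_inj h)
    have hU := measure_iUnion hdisj (fun n => measurableSet_singleton _) (μ := μ)
    have htop : μ (⋃ n : ℕ, ({g^[n] z} : Set (AddCircle (1:ℝ)))) = ⊤ := by
      rw [hU]
      have : ∀ n : ℕ, μ {g^[n] z} = μ {z} := iter_mass
      rw [tsum_congr this]
      exact ENNReal.tsum_const_eq_top_of_ne_zero h0
    have hle : μ (⋃ n : ℕ, ({g^[n] z} : Set (AddCircle (1:ℝ)))) ≤ 1 := by
      rw [← measure_univ (μ := μ)]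
      exact measure_mono (Set.subset_univ _)
    rw [htop] at hle
    exact absurd hle (by simp)
  -- the candidate semiconjugacy
  set F : ℝ → ℝ := fun x => (⌊x⌋ : ℝ) + (μ (A (⌊x⌋ : ℝ) x)).toReal with hF
  have hfin : ∀ S : Set (AddCircle (1:ℝ)), μ S ≠ ⊤ := fun S => measure_ne_top μ S
  have master : ∀ a b : ℝ, a ≤ b → b ≤ a + 1 → F b = F a + (μ (A a b)).toReal := by
    intro a b hab hba
    by_cases hfl : ⌊b⌋ = ⌊a⌋
    · have hn1 : b ≤ (⌊a⌋ : ℝ) + 1 := by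
        have := Int.lt_floor_add_one b
        rw [hfl] at this
        linarith
      have h1 := arc_add (⌊a⌋ : ℝ) a b (Int.floor_le a) hab hn1
      have h1' := congrArg ENNReal.toReal h1
      rw [ENNReal.toReal_add (hfin _) (hfin _)] at h1'
      rw [hF]
      simp only
      rw [hfl]
      linarith
    · have hmono' : ⌊a⌋ ≤ ⌊b⌋ := Int.floor_le_floor hab
      have hup : ⌊b⌋ ≤ ⌊a⌋ + 1 := by
        have h := Int.floor_le_floor hba
        rwa [Int.floor_add_one] at h
      have hb' : ⌊b⌋ = ⌊a⌋ + 1 :=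
        le_antisymm hup (Int.lt_iff_add_one_le.mp (lt_of_le_of_ne hmono' (Ne.symm hfl)))
      set n : ℝ := (⌊a⌋ : ℝ) with hn
      have hna : n ≤ a := Int.floor_le a
      have han : a < n + 1 := Int.lt_floor_add_one a
      have hbn : (⌊b⌋ : ℝ) = n + 1 := by rw [hb']; push_cast; ring
      have hnb : n + 1 ≤ b := by rw [← hbn]; exact Int.floor_le b
      have e1 := arc_add a (n+1) b (by linarith) hnb hba
      have e2 := arc_add n a (n+1) hna (by linarith) le_rfl
      have e3 := arc_full n
      have e1' := congrArg ENNReal.toReal e1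
      have e2' := congrArg ENNReal.toReal e2
      rw [ENNReal.toReal_add (hfin _) (hfin _)] at e1' e2'
      rw [e3] at e2'
      rw [hF]
      simp only
      rw [hbn]
      have : ENNReal.toReal 1 = 1 := by simp
      rw [this] at e2'
      linarith
  have Flift : ∀ x : ℝ, F (x + 1) = F x + 1 := by
    intro x
    rw [hF]
    simp only
    have h1 : ⌊x + 1⌋ = ⌊x⌋ + 1 := Int.floor_add_one x
    rw [h1]
    have h2 : ((⌊x⌋ + 1 : ℤ) : ℝ) = (⌊x⌋ : ℝ) + 1 := by push_cast; ring
    rw [h2, arc_shift]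
    ring
  have Fmono : Monotone F := by
    have key : ∀ k : ℕ, ∀ a b : ℝ, a ≤ b → b ≤ a + k → F a ≤ F b := by
      intro k
      induction k with
      | zero => intro a b hab hba; simp at hba; have : a = b := le_antisymm hab hba; rw [this]
      | succ k ih =>
        intro a b hab hba
        by_cases h : b ≤ a + 1
        · rw [master a b hab h]
          have := ENNReal.toReal_nonneg (a := μ (A a b))
          linarith
        · push_neg at h
          have h1 : F a ≤ F (a + 1) := by
            rw [master a (a+1) (by linarith) le_rfl]
            have := ENNReal.toReal_nonneg (a := μ (A a (a+1)))
            linarith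
          have h2 : F (a + 1) ≤ F b := by
            apply ih (a+1) b h.le
            push_cast at hba ⊢
            linarith
          linarith
    intro a b hab
    obtain ⟨k, hk⟩ := exists_nat_ge (b - a)
    exact key k a b hab (by linarith)
  have F0 : F 0 = 0 := by
    have hempty : A ((0:ℤ):ℝ) (0:ℝ) = ∅ := by
      rw [hA]
      simp
    rw [hF]
    simp only [Int.floor_zero]
    rw [hempty, measure_empty]
    simp
  -- semiconjugacy
  have hG1 : G 1 = G 0 + 1 := by
    have := hG_lift 0
    rwa [zero_add] at this
  have step1 : ∀ x : ℝ, 0 ≤ x → x ≤ 1 → F (G x) - F (G 0) = F x - F 0 := by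
    intro x h0 h1
    have hx := master 0 x h0 (by linarith)
    have hGx := master (G 0) (G x) (hG_mono.monotone h0) (by
      have := hG_mono.monotone h1
      rw [hG1] at this
      linarith)
    rw [arc_inv 0 x h0 (by linarith)] at hGx
    linarith [hx, hGx]
  set D : ℝ → ℝ := fun x => F (G x) - F x with hD
  have Dlift : ∀ x : ℝ, D (x + 1) = D x := by
    intro x
    rw [hD]
    simp only
    rw [hG_lift, Flift, Flift]
    ring
  have Dint : ∀ (x : ℝ) (m : ℤ), D (x + m) = D x := by
    intro x m
    induction m using Int.induction_on with
    | zero => simp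
    | succ k ih =>
      have : x + ((k : ℤ) + 1 : ℤ) = (x + (k : ℤ)) + 1 := by push_cast; ring
      rw [this, Dlift, ih]
    | pred k ih =>
      have h1 : x + (-(k : ℤ) - 1 : ℤ) + 1 = x + (-(k : ℤ) : ℤ) := by push_cast; ring
      have := Dlift (x + (-(k : ℤ) - 1 : ℤ))
      rw [h1, ih] at this
      rw [← this]
  have hsemi : ∀ x : ℝ, F (G x) = F x + F (G 0) := by
    intro x
    have hfr : D x = D (Int.fract x) := by
      have h := Dint (Int.fract x) ⌊x⌋
      rw [Int.fract_add_floor] at h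
      exact h
    have hfr2 : D (Int.fract x) = D 0 := by
      have h := step1 (Int.fract x) (Int.fract_nonneg x) (Int.fract_lt_one x).le
      rw [hD]
      simp only
      rw [F0] at h
      linarith
    have : D x = D 0 := hfr.trans hfr2
    rw [hD] at this
    simp only at this
    rw [F0] at this
    linarith
  -- identify the constant with α
  have hc : F (G 0) = α := by
    set Fl : CircleDeg1Lift := ⟨⟨F, Fmono⟩, Flift⟩ with hFl
    set Tc : CircleDeg1Lift :=
      (↑(CircleDeg1Lift.translate (Multiplicative.ofAdd (F (G 0)))) : CircleDeg1Lift) with hTc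
    have hsemiBy : SemiconjBy Fl Gl Tc := by
      rw [SemiconjBy]
      ext x
      rw [CircleDeg1Lift.mul_apply, CircleDeg1Lift.mul_apply]
      show F (G x) = Tc (F x)
      rw [hTc, CircleDeg1Lift.translate_apply]
      rw [hsemi x]
      ring
    have := CircleDeg1Lift.translationNumber_eq_of_semiconjBy hsemiBy
    rw [hτ] at this
    rw [hTc] at this
    rw [CircleDeg1Lift.translationNumber_translate] at this
    linarith [this]
  -- continuity
  have ht_pos : ∀ n : ℕ, (0:ℝ) < 1/((n:ℝ)+1) := by
    intro n; positivity
  have ht_le : ∀ n : ℕ, 1/((n:ℝ)+1) ≤ 1 := by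
    intro n
    rw [div_le_one (by positivity)]
    linarith [Nat.cast_nonneg (α := ℝ) n]
  have Fcont : Continuous F := by
    rw [continuous_iff_continuousAt]
    intro x
    -- right-hand limit
    have hright : Tendsto (fun n : ℕ => F (x + 1/((n:ℝ)+1))) atTop (nhds (F x)) := by
      set s : ℕ → Set (AddCircle (1:ℝ)) :=
        fun n => (fun z => ((AddCircle.equivIoc 1 x z : ℝ))) ⁻¹' Set.Ioc x (x + 1/((n:ℝ)+1)) with hs
      have hseq : ∀ n : ℕ, A x (x + 1/((n:ℝ)+1)) = s n := by
        intro n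
        exact arc_eq _ _ (by linarith [ht_le n])
      have hmeasn : ∀ n, NullMeasurableSet (s n) μ :=
        fun n => ((measurable_repr x) measurableSet_Ioc).nullMeasurableSet
      have hanti : Antitone s := by
        intro n m hnm
        apply Set.preimage_mono
        apply Set.Ioc_subset_Ioc_right
        have : ((n:ℝ)+1) ≤ ((m:ℝ)+1) := by
          have := Nat.cast_le (α := ℝ).2 hnm
          linarith
        have := one_div_le_one_div_of_le (by positivity : (0:ℝ) < (n:ℝ)+1) this
        linarith
      have hint : ⋂ n, s n = ∅ := by
        rw [hs, ← Set.preimage_iInter]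
        have : ⋂ n : ℕ, Set.Ioc x (x + 1/((n:ℝ)+1)) = ∅ := by
          ext y
          simp only [Set.mem_iInter, Set.mem_Ioc, Set.mem_empty_iff_false, iff_false, not_forall]
          by_contra hcon
          push_neg at hcon
          have hy : x < y := (hcon 0).1
          obtain ⟨n, hn⟩ := exists_nat_gt (1/(y - x))
          have h2 := (hcon n).2
          have hpos : (0:ℝ) < y - x := by linarith
          have h3 : 1/(y-x) > 0 := by positivity
          have h4 : (0:ℝ) < (n:ℝ) := lt_trans h3 hn
          have h5 : 1/((n:ℝ)+1) < y - x := by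
            rw [div_lt_iff₀ (by positivity)]
            rw [div_lt_iff₀ hpos] at hn
            nlinarith
          linarith
        rw [this, Set.preimage_empty]
      have h0 := tendsto_measure_iInter_atTop hmeasn hanti ⟨0, hfin _⟩
      rw [hint, measure_empty] at h0
      have h0' : Tendsto (fun n : ℕ => (μ (s n)).toReal) atTop (nhds 0) := by
        have := (ENNReal.tendsto_toReal (a := 0) (by simp)).comp h0
        rw [ENNReal.toReal_zero] at this; exact this
      have heq : (fun n : ℕ => F (x + 1/((n:ℝ)+1))) =
          fun n : ℕ => F x + (μ (s n)).toReal := by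
        funext n
        rw [master x (x + 1/((n:ℝ)+1)) (by linarith [ht_pos n]) (by linarith [ht_le n]), hseq n]
      rw [heq]
      have := tendsto_const_nhds (x := F x) (f := atTop (α := ℕ)) |>.add h0'
      simpa using this
    -- left-hand limit
    have hleft : Tendsto (fun n : ℕ => F (x - 1/((n:ℝ)+1))) atTop (nhds (F x)) := by
      set s : ℕ → Set (AddCircle (1:ℝ)) :=
        fun n => (fun z => ((AddCircle.equivIoc 1 (x-1) z : ℝ))) ⁻¹' Set.Ioc (x - 1/((n:ℝ)+1)) x with hs
      have hseq : ∀ n : ℕ, A (x - 1/((n:ℝ)+1)) x = s n := by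
        intro n
        apply image_coe_eq_preimage (x-1)
        intro y hy
        constructor
        · have := ht_le n
          have := hy.1
          linarith
        · have := hy.2
          linarith
      have hmeasn : ∀ n, NullMeasurableSet (s n) μ :=
        fun n => ((measurable_repr (x-1)) measurableSet_Ioc).nullMeasurableSet
      have hanti : Antitone s := by
        intro n m hnm
        apply Set.preimage_mono
        apply Set.Ioc_subset_Ioc_left
        have : ((n:ℝ)+1) ≤ ((m:ℝ)+1) := by
          have := Nat.cast_le (α := ℝ).2 hnm
          linarith
        have := one_div_le_one_div_of_le (by positivity : (0:ℝ) < (n:ℝ)+1) this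
        linarith
      have hint : ⋂ n, s n = {(x : AddCircle (1:ℝ))} := by
        rw [hs, ← Set.preimage_iInter]
        have h1 : ⋂ n : ℕ, Set.Ioc (x - 1/((n:ℝ)+1)) x = {x} := by
          ext y
          simp only [Set.mem_iInter, Set.mem_Ioc, Set.mem_singleton_iff]
          constructor
          · intro h
            have hyx : y ≤ x := (h 0).2
            by_contra hne
            have hlt : y < x := lt_of_le_of_ne hyx hne
            obtain ⟨n, hn⟩ := exists_nat_gt (1/(x - y))
            have h2 := (h n).1
            have hpos : (0:ℝ) < x - y := by linarith
            have h3 : 1/(x-y) > 0 := by positivity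
            have h5 : 1/((n:ℝ)+1) < x - y := by
              rw [div_lt_iff₀ (by positivity)]
              rw [div_lt_iff₀ hpos] at hn
              nlinarith
            linarith
          · rintro rfl
            intro n
            exact ⟨by linarith [ht_pos n], le_refl y⟩
        rw [h1]
        ext z
        simp only [Set.mem_preimage, Set.mem_singleton_iff]
        constructor
        · intro hz
          have := coe_equivIoc_symm (x-1) z
          rw [← this, hz]
        · rintro rfl
          exact equivIoc_coe_eq (x-1) x ⟨by linarith, by linarith⟩
      have h0 := tendsto_measure_iInter_atTop hmeasn hanti ⟨0, hfin _⟩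
      rw [hint, hatomless] at h0
      have h0' : Tendsto (fun n : ℕ => (μ (s n)).toReal) atTop (nhds 0) := by
        have := (ENNReal.tendsto_toReal (a := 0) (by simp)).comp h0
        rw [ENNReal.toReal_zero] at this; exact this
      have heq : (fun n : ℕ => F (x - 1/((n:ℝ)+1))) =
          fun n : ℕ => F x - (μ (s n)).toReal := by
        funext n
        have := master (x - 1/((n:ℝ)+1)) x (by linarith [ht_pos n]) (by linarith [ht_le n])
        rw [hseq n] at this
        linarith
      rw [heq]
      have := tendsto_const_nhds (x := F x) (f := atTop (α := ℕ)) |>.sub h0'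
      simpa using this
    rw [ContinuousAt]
    apply tendsto_order.2
    constructor
    · intro v hv
      obtain ⟨n, hn⟩ := (hleft.eventually (eventually_gt_nhds hv)).exists
      filter_upwards [Ioi_mem_nhds (show x - 1/((n:ℝ)+1) < x by linarith [ht_pos n])] with y hy
      exact lt_of_lt_of_le hn (Fmono (le_of_lt hy))
    · intro v hv
      obtain ⟨n, hn⟩ := (hright.eventually (eventually_lt_nhds hv)).exists
      filter_upwards [Iio_mem_nhds (show x < x + 1/((n:ℝ)+1) by linarith [ht_pos n])] with y hy
      exact lt_of_le_of_lt (Fmono (le_of_lt hy)) hn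
  refine ⟨F, Fcont, Fmono, Flift, fun x => by rw [hsemi x, hc], F0, ?_⟩
  intro a b hab hba
  have hm := master a b hab hba
  have hval : (μ (A a b)).toReal = F b - F a := by linarith
  rw [show (((↑) : ℝ → AddCircle (1:ℝ)) '' Set.Ioc a b) = A a b from rfl]
  rw [← hval, ENNReal.ofReal_toReal (hfin _)]


/-- An orientation-preserving circle homeomorphism `g` (with lift `G`) with
irrational rotation number `α` has a unique invariant Borel probability measure, and any two
continuous non-decreasing degree-one semi-conjugacies to the rotation by `α` (given by
their lifts `H₁, H₂` with `Hᵢ ∘ G = Hᵢ + α`) differ by a constant. -/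
theorem stmt5 (g : AddCircle (1:ℝ) → AddCircle (1:ℝ)) (G : ℝ → ℝ) (α : ℝ)
    (hg_cont : Continuous g) (hg_bij : Function.Bijective g)
    (hG_cont : Continuous G) (hG_mono : StrictMono G)
    (hG_lift : ∀ x, G (x + 1) = G x + 1)
    (hproj : ∀ x : ℝ, g (x : AddCircle (1:ℝ)) = ((G x : ℝ) : AddCircle (1:ℝ)))
    (hα : Tendsto (fun n : ℕ => G^[n] 0 / n) atTop (nhds α))
    (hirr : Irrational α) :
    (∀ μ₁ μ₂ : Measure (AddCircle (1:ℝ)), IsProbabilityMeasure μ₁ → IsProbabilityMeasure μ₂ →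
      μ₁.map g = μ₁ → μ₂.map g = μ₂ → μ₁ = μ₂) ∧
    (∀ H₁ H₂ : ℝ → ℝ, Continuous H₁ → Monotone H₁ → (∀ x, H₁ (x + 1) = H₁ x + 1) →
      Continuous H₂ → Monotone H₂ → (∀ x, H₂ (x + 1) = H₂ x + 1) →
      (∀ x, H₁ (G x) = H₁ x + α) → (∀ x, H₂ (G x) = H₂ x + α) →
      ∃ cst : ℝ, ∀ x, H₁ x = H₂ x + cst) := by
  haveI : Fact ((0:ℝ) < 1) := ⟨one_pos⟩
  constructor
  · intro μ₁ μ₂ hp₁ hp₂ hi₁ hi₂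
    obtain ⟨F₁, c₁, m₁, l₁, s₁, z₁, r₁⟩ := exists_lift_of_invariant g G α hg_cont hg_bij
      hG_cont hG_mono hG_lift hproj hα hirr μ₁ hp₁ hi₁
    obtain ⟨F₂, c₂, m₂, l₂, s₂, z₂, r₂⟩ := exists_lift_of_invariant g G α hg_cont hg_bij
      hG_cont hG_mono hG_lift hproj hα hirr μ₂ hp₂ hi₂
    obtain ⟨c, hcst⟩ := semiconj_unique G α hG_cont hG_mono hG_lift hirr F₁ F₂
      c₁ m₁ l₁ c₂ m₂ l₂ s₁ s₂
    have hc0 : c = 0 := by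
      have := hcst 0
      rw [z₁, z₂] at this
      linarith
    have hFeq : ∀ x, F₁ x = F₂ x := by
      intro x
      have := hcst x
      rw [hc0] at this
      simpa using this
    have harc : ∀ a b : ℝ, a ≤ b → b ≤ a + 1 →
        μ₁ (((↑) : ℝ → AddCircle (1:ℝ)) '' Set.Ioc a b)
          = μ₂ (((↑) : ℝ → AddCircle (1:ℝ)) '' Set.Ioc a b) := by
      intro a b hab hba
      rw [r₁ a b hab hba, r₂ a b hab hba, hFeq, hFeq]
    set r0 : AddCircle (1:ℝ) → ℝ := fun z => ((AddCircle.equivIoc 1 0 z : ℝ)) with hr0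
    have hr0m : Measurable r0 := measurable_repr 0
    set ν₁ : Measure ℝ := μ₁.map r0 with hν₁
    set ν₂ : Measure ℝ := μ₂.map r0 with hν₂
    haveI : IsProbabilityMeasure ν₁ := Measure.isProbabilityMeasure_map hr0m.aemeasurable
    haveI : IsProbabilityMeasure ν₂ := Measure.isProbabilityMeasure_map hr0m.aemeasurable
    have hνuniv : ν₁ Set.univ = ν₂ Set.univ := by
      rw [measure_univ, measure_univ]
    have hrange : ∀ z, r0 z ∈ Set.Ioc (0:ℝ) 1 := by
      intro z
      have h := mem_Ioc_equivIoc 0 z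
      simpa using h
    have hIoc : ∀ ⦃s t : ℝ⦄, s < t → ν₁ (Set.Ioc s t) = ν₂ (Set.Ioc s t) := by
      intro s t hst
      rw [hν₁, hν₂, Measure.map_apply hr0m measurableSet_Ioc,
        Measure.map_apply hr0m measurableSet_Ioc]
      have hred : (r0 ⁻¹' Set.Ioc s t) = r0 ⁻¹' (Set.Ioc (max s 0) (min t 1)) := by
        ext z
        have hz := hrange z
        simp only [Set.mem_preimage, Set.mem_Ioc, max_lt_iff, le_min_iff]
        constructor
        · intro h
          exact ⟨⟨h.1, hz.1⟩, h.2, hz.2⟩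
        · intro h
          exact ⟨h.1.1, h.2.1⟩
      rw [hred]
      rcases le_or_gt (min t 1) (max s 0) with h | h
      · rw [Set.Ioc_eq_empty (not_lt.2 h), Set.preimage_empty, measure_empty, measure_empty]
      · have h0 : (0:ℝ) ≤ max s 0 := le_max_right s 0
        have h1 : min t 1 ≤ 1 := min_le_right t 1
        have heq1 : (((↑) : ℝ → AddCircle (1:ℝ)) '' Set.Ioc (max s 0) (min t 1))
            = r0 ⁻¹' (Set.Ioc (max s 0) (min t 1)) := by
          apply image_coe_eq_preimage 0
          intro y hy
          exact ⟨lt_of_le_of_lt h0 hy.1, by linarith [hy.2]⟩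
        rw [← heq1]
        exact harc _ _ h.le (by linarith)
    have hνeq : ν₁ = ν₂ := Measure.ext_of_Ioc_finite ν₁ ν₂ hνuniv hIoc
    have hrec : ∀ μ : Measure (AddCircle (1:ℝ)),
        (μ.map r0).map ((↑) : ℝ → AddCircle (1:ℝ)) = μ := by
      intro μ
      have hcm : Measurable (((↑) : ℝ → AddCircle (1:ℝ))) := by
        exact (AddCircle.continuous_mk' 1).measurable
      rw [Measure.map_map hcm hr0m]
      have hcomp : (((↑) : ℝ → AddCircle (1:ℝ)) ∘ r0) = id := funext (coe_equivIoc_symm 0)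
      rw [hcomp, Measure.map_id]
    calc μ₁ = (μ₁.map r0).map ((↑) : ℝ → AddCircle (1:ℝ)) := (hrec μ₁).symm
    _ = (μ₂.map r0).map ((↑) : ℝ → AddCircle (1:ℝ)) := by rw [← hν₁, ← hν₂, hνeq]
    _ = μ₂ := hrec μ₂
  · intro H₁ H₂ h₁c h₁m h₁l h₂c h₂m h₂l h₁s h₂s
    exact semiconj_unique G α hG_cont hG_mono hG_lift hirr H₁ H₂
      h₁c h₁m h₁l h₂c h₂m h₂l h₁s h₂s
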